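/- Let X be a nonsingular projective variety of dimension q and let D_1, …, D_r be divisors on X such that D_i^q > 0 for all i and all q-fold intersection numbers D_{i_1}.D_{i_2}.…D_{i_q} are nonnegative. Then there exist real numbers a_1, …, a_r > 0 such that, setting D' = ∑ a_i D_i, one has a_i D_i.(D')^{q−1} = (D')^q / r for every i. -/

import Mathlib

open Function Finset

section Equideg

lemma equideg_sym_update {q : ℕ} {V : Type*} [AddCommGroup V] [Module ℝ V]
    (B : MultilinearMap ℝ (fun _ : Fin q => V) ℝ)
    (hBsymm : ∀ (σ : Equiv.Perm (Fin q)) (v : Fin q → V), B (v ∘ σ) = B v)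
    (x v : V) (k z : Fin q) :
    B (Function.update (fun _ => x) k v) = B (Function.update (fun _ => x) z v) := by
  rw [← hBsymm (Equiv.swap k z)]
  congr 1
  funext j
  simp only [Function.comp_apply, Function.update_apply, Equiv.swap_apply_def]
  split_ifs <;> simp_all

noncomputable def equidegL {r : ℕ} {V : Type*} [AddCommGroup V] [Module ℝ V]
    (D : Fin r → V) : (Fin r → ℝ) →ₗ[ℝ] V where
  toFun a := ∑ j, a j • D j
  map_add' a b := by simp [add_smul, Finset.sum_add_distrib]
  map_smul' c a := by simp [smul_smul, Finset.smul_sum]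

noncomputable def equidegBc {q r : ℕ} {V : Type*} [AddCommGroup V] [Module ℝ V]
    (B : MultilinearMap ℝ (fun _ : Fin q => V) ℝ) (D : Fin r → V) :
    ContinuousMultilinearMap ℝ (fun _ : Fin q => (Fin r → ℝ)) ℝ :=
  ∑ f : Fin q → Fin r, B (fun j => D (f j)) •
    (ContinuousMultilinearMap.mkPiAlgebra ℝ (Fin q) ℝ).compContinuousLinearMap
      (fun j => ContinuousLinearMap.proj (f j))

lemma equidegBc_apply {q r : ℕ} {V : Type*} [AddCommGroup V] [Module ℝ V]
    (B : MultilinearMap ℝ (fun _ : Fin q => V) ℝ) (D : Fin r → V)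
    (m : Fin q → (Fin r → ℝ)) :
    equidegBc B D m = B (fun j => equidegL D (m j)) := by
  have : (fun j => equidegL D (m j)) = fun j => ∑ i : Fin r, (m j i) • D i := rfl
  rw [this, MultilinearMap.map_sum]
  simp only [equidegBc, ContinuousMultilinearMap.sum_apply, ContinuousMultilinearMap.smul_apply,
    ContinuousMultilinearMap.compContinuousLinearMap_apply, ContinuousLinearMap.proj_apply,
    ContinuousMultilinearMap.mkPiAlgebra_apply]
  refine Finset.sum_congr rfl fun f _ => ?_
  rw [MultilinearMap.map_smul_univ]
  simp [mul_comm]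

lemma equidegL_single {r : ℕ} {V : Type*} [AddCommGroup V] [Module ℝ V]
    (D : Fin r → V) (i : Fin r) : equidegL D (Pi.single i (1 : ℝ)) = D i := by
  simp only [equidegL, LinearMap.coe_mk, AddHom.coe_mk]
  rw [Finset.sum_eq_single i]
  · simp
  · intro j _ hj; rw [Pi.single_eq_of_ne hj]; simp
  · intro h; exact absurd (Finset.mem_univ i) h

end Equideg

set_option maxHeartbeats 1000000 in
/-- Equidegreelizability (Lemma on Lagrange multipliers).  `V` stands for
`Div(X) ⊗ ℝ` for a nonsingular projective variety `X` of dimension `q`, and `B` for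
the `ℝ`-multilinear extension of the `q`-fold intersection number (a symmetric
multilinear form).  Given divisors `D 1, …, D r` with `D_i^q > 0` for all `i` and all
`q`-fold intersection numbers among the `D_i` nonnegative, there are positive reals
`a_i` such that `D' = ∑ a_i D_i` satisfies `a_i D_i.(D')^{q−1} = (D')^q / r` for
every `i`. -/
theorem stmt_10 (q r : ℕ) (hq : 0 < q) (hr : 0 < r)
    {V : Type*} [AddCommGroup V] [Module ℝ V]
    (B : MultilinearMap ℝ (fun _ : Fin q => V) ℝ)
    (hBsymm : ∀ (σ : Equiv.Perm (Fin q)) (v : Fin q → V), B (v ∘ σ) = B v)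
    (D : Fin r → V)
    (hpos : ∀ i, 0 < B (fun _ => D i))
    (hnonneg : ∀ f : Fin q → Fin r, 0 ≤ B (fun j => D (f j))) :
    ∃ a : Fin r → ℝ, (∀ i, 0 < a i) ∧
      ∀ i, B (Function.update (fun _ => ∑ j, a j • D j) ⟨0, hq⟩ (a i • D i))
        = B (fun _ => ∑ j, a j • D j) / r := by
  classical
  set z : Fin q := ⟨0, hq⟩
  set L := equidegL D with hL
  set Bc := equidegBc B D with hBc
  set φ : (Fin r → ℝ) → ℝ := fun b => Bc (fun _ => b) with hφdef
  set g : (Fin r → ℝ) → ℝ := fun b => ∑ i, Real.log (b i) with hgdef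
  have i₀ : Fin r := ⟨0, hr⟩
  -- the minimum of the diagonal values
  obtain ⟨c, hc_pos, hc_le⟩ : ∃ c : ℝ, 0 < c ∧ ∀ i, c ≤ B (fun _ => D i) := by
    refine ⟨Finset.univ.inf' ⟨i₀, Finset.mem_univ i₀⟩ (fun i => B (fun _ => D i)), ?_, ?_⟩
    · exact (Finset.lt_inf'_iff _).2 fun i _ => hpos i
    · exact fun i => Finset.inf'_le _ (Finset.mem_univ i)
  set C := φ (fun _ => 1) with hCdef
  set M := max 2 ((C + 1) / c) with hMdef
  have hM2 : (2 : ℝ) ≤ M := le_max_left _ _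
  have hM1 : (1 : ℝ) ≤ M := by linarith
  have hM0 : (0 : ℝ) < M := by linarith
  have hMq : C < c * M ^ q := by
    have h1 : C + 1 ≤ c * M := by
      have := le_max_right 2 ((C + 1) / c)
      calc C + 1 = c * ((C + 1) / c) := by field_simp
        _ ≤ c * M := by nlinarith
    have h2 : M ≤ M ^ q := le_self_pow₀ hM1 hq.ne'
    nlinarith
  set m := (M ^ (r - 1))⁻¹ with hmdef
  have hMr1 : (1 : ℝ) ≤ M ^ (r - 1) := one_le_pow₀ hM1
  have hm_pos : 0 < m := by positivity
  have hm1 : m ≤ 1 := by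
    rw [hmdef]
    exact inv_le_one_of_one_le₀ hMr1
  set Box := Set.Icc (fun _ => m : Fin r → ℝ) (fun _ => M) with hBox
  set K := Box ∩ {b | g b = 0} with hK
  -- K is compact
  have hKc : IsCompact K := by
    have hgt : Continuous (fun b : Fin r → ℝ => ∑ i, Real.log (max (b i) m)) := by
      refine continuous_finset_sum _ fun i _ => Continuous.log ?_ fun x => ?_
      · exact (continuous_apply i).max continuous_const
      · exact (lt_of_lt_of_le hm_pos (le_max_right _ _)).ne'
    have hKeq : K = Box ∩ {b | ∑ i, Real.log (max (b i) m) = 0} := by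
      ext b
      simp only [hK, Set.mem_inter_iff, Set.mem_setOf_eq, and_congr_right_iff]
      intro hb
      have : ∀ i, max (b i) m = b i := fun i => max_eq_left (hb.1 i)
      constructor <;> intro h <;> rw [← h] <;> exact Finset.sum_congr rfl fun i _ => by rw [this]
    rw [hKeq]
    exact isCompact_Icc.inter_right (isClosed_eq hgt continuous_const)
  have h1K : (fun _ => (1 : ℝ)) ∈ K := by
    refine ⟨⟨fun i => hm1, fun i => hM1⟩, ?_⟩
    show (∑ i : Fin r, Real.log ((fun _ => (1:ℝ)) i)) = 0
    simp
  have hφc : Continuous φ := Bc.cont.comp (continuous_pi fun _ => continuous_id)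
  obtain ⟨a, haK, hamin⟩ := hKc.exists_isMinOn ⟨_, h1K⟩ hφc.continuousOn
  have hapos : ∀ i, 0 < a i := fun i => lt_of_lt_of_le hm_pos (haK.1.1 i)
  have hga : g a = 0 := haK.2
  have hφaC : φ a ≤ C := hamin h1K
  -- expansion of φ
  have hexp : ∀ b : Fin r → ℝ,
      φ b = ∑ f : Fin q → Fin r, (∏ j, b (f j)) * B (fun j => D (f j)) := by
    intro b
    simp only [hφdef, hBc, equidegBc, ContinuousMultilinearMap.sum_apply,
      ContinuousMultilinearMap.smul_apply,
      ContinuousMultilinearMap.compContinuousLinearMap_apply, ContinuousLinearMap.proj_apply,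
      ContinuousMultilinearMap.mkPiAlgebra_apply, smul_eq_mul]
    exact Finset.sum_congr rfl fun f _ => mul_comm _ _
  -- a is a global minimum on the positive part of the constraint set
  have hglob : ∀ b : Fin r → ℝ, (∀ i, 0 < b i) → g b = 0 → φ a ≤ φ b := by
    intro b hbpos hgb
    by_cases hb : b ∈ Box
    · exact hamin ⟨hb, hgb⟩
    · have hbig : ∃ i, M < b i := by
        by_contra h
        push_neg at h
        refine hb ⟨fun i => ?_, fun i => h i⟩
        -- lower bound from the constraint
        have hsum : Real.log (b i) + ∑ j ∈ Finset.univ.erase i, Real.log (b j) = 0 := by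
          rw [Finset.add_sum_erase Finset.univ (fun j => Real.log (b j))
            (Finset.mem_univ i)]
          exact hgb
        have hbound : ∑ j ∈ Finset.univ.erase i, Real.log (b j)
            ≤ (r - 1 : ℕ) * Real.log M := by
          have hcard : (Finset.univ.erase i).card = r - 1 := by
            rw [Finset.card_erase_of_mem (Finset.mem_univ i), Finset.card_univ, Fintype.card_fin]
          calc ∑ j ∈ Finset.univ.erase i, Real.log (b j)
              ≤ ∑ _j ∈ Finset.univ.erase i, Real.log M := by
                refine Finset.sum_le_sum fun j _ => ?_
                exact (Real.log_le_log_iff (hbpos j) hM0).2 (h j)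
            _ = (r - 1 : ℕ) * Real.log M := by rw [Finset.sum_const, hcard, nsmul_eq_mul]
        have hlogbi : -((r - 1 : ℕ) * Real.log M) ≤ Real.log (b i) := by linarith
        have hem : Real.exp (-((r - 1 : ℕ) * Real.log M)) = m := by
          rw [Real.exp_neg, Real.exp_nat_mul, Real.exp_log hM0]
        calc m = Real.exp (-((r - 1 : ℕ) * Real.log M)) := hem.symm
          _ ≤ Real.exp (Real.log (b i)) := Real.exp_le_exp.2 hlogbi
          _ = b i := Real.exp_log (hbpos i)
      obtain ⟨i, hi⟩ := hbig
      have hstep : c * M ^ q ≤ φ b := by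
        rw [hexp b]
        set fi : Fin q → Fin r := fun _ => i with hfi
        have hsingle : (∏ j : Fin q, b (fi j)) * B (fun j => D (fi j))
            ≤ ∑ f : Fin q → Fin r, (∏ j, b (f j)) * B (fun j => D (f j)) := by
          refine Finset.single_le_sum
            (f := fun f : Fin q → Fin r => (∏ j, b (f j)) * B (fun j => D (f j)))
            (fun f _ => ?_) (Finset.mem_univ fi)
          exact mul_nonneg (Finset.prod_nonneg fun j _ => (hbpos _).le) (hnonneg f)
        have hval : (∏ j : Fin q, b (fi j)) = b i ^ q := by
          simp [hfi, Finset.prod_const, Finset.card_univ]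
        rw [hval] at hsingle
        refine le_trans ?_ hsingle
        calc c * M ^ q = M ^ q * c := mul_comm _ _
          _ ≤ b i ^ q * B (fun j => D i) :=
            mul_le_mul (pow_le_pow_left₀ hM0.le hi.le q) (hc_le i) hc_pos.le
              (pow_nonneg (by linarith) q)
          _ = b i ^ q * B (fun j => D (fi j)) := rfl
      linarith
  -- local extremum on the constraint set
  have hUopen : IsOpen {b : Fin r → ℝ | ∀ i, 0 < b i} := by
    have : {b : Fin r → ℝ | ∀ i, 0 < b i} = ⋂ i, (fun b : Fin r → ℝ => b i) ⁻¹' Set.Ioi 0 := by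
      ext b; simp [Set.mem_iInter]
    rw [this]
    exact isOpen_iInter_of_finite fun i => isOpen_Ioi.preimage (continuous_apply i)
  have hextr : IsLocalExtrOn φ {x | g x = g a} a := by
    left
    filter_upwards [mem_nhdsWithin_of_mem_nhds (hUopen.mem_nhds hapos),
      self_mem_nhdsWithin] with x hxU hxs
    exact hglob x hxU (hxs.trans hga)
  -- the two strict derivatives
  set Δ : (Fin r → ℝ) →L[ℝ] (Fin q → (Fin r → ℝ)) :=
    ContinuousLinearMap.pi (fun _ : Fin q => ContinuousLinearMap.id ℝ (Fin r → ℝ)) with hΔ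
  set Dφ : (Fin r → ℝ) →L[ℝ] ℝ := (Bc.linearDeriv (fun _ => a)).comp Δ with hDφ
  have hφ' : HasStrictFDerivAt φ Dφ a := by
    have h1 : HasFDerivAt φ ((Bc.linearDeriv (Δ a)).comp Δ) a :=
      (Bc.hasFDerivAt (Δ a)).comp a Δ.hasFDerivAt
    have h2 : ContDiffAt ℝ 2 φ a := (Bc.contDiff.comp Δ.contDiff).contDiffAt
    exact h2.hasStrictFDerivAt' h1 (by norm_num)
  set Dg : (Fin r → ℝ) →L[ℝ] ℝ :=
    ∑ i, (a i)⁻¹ • (ContinuousLinearMap.proj i : (Fin r → ℝ) →L[ℝ] ℝ) with hDg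
  have hg' : HasStrictFDerivAt g Dg a := by
    apply HasStrictFDerivAt.fun_sum
    intro i _
    have hp : HasStrictFDerivAt (fun y : Fin r → ℝ => y i)
        (ContinuousLinearMap.proj i : (Fin r → ℝ) →L[ℝ] ℝ) a :=
      (ContinuousLinearMap.proj i : (Fin r → ℝ) →L[ℝ] ℝ).hasStrictFDerivAt
    exact (Real.hasStrictDerivAt_log (hapos i).ne').comp_hasStrictFDerivAt a hp
  obtain ⟨Λ, Λ₀, hΛne, hΛeq⟩ := hextr.exists_multipliers_of_hasStrictFDerivAt_1d hg' hφ'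
  -- evaluate the multiplier identity at the coordinate vectors
  set t : Fin r → ℝ := fun i => B (Function.update (fun _ => L a) z (D i)) with ht
  have hLsingle : ∀ i, L (Pi.single i (1 : ℝ)) = D i := fun i => equidegL_single D i
  have hDg_single : ∀ i, Dg (Pi.single i (1 : ℝ)) = (a i)⁻¹ := by
    intro i
    rw [hDg]
    simp only [ContinuousLinearMap.sum_apply, ContinuousLinearMap.smul_apply,
      ContinuousLinearMap.proj_apply, smul_eq_mul]
    rw [Finset.sum_eq_single i]
    · simp
    · intro j _ hj; rw [Pi.single_eq_of_ne hj]; simp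
    · intro h; exact absurd (Finset.mem_univ i) h
  have hDφ_single : ∀ i, Dφ (Pi.single i (1 : ℝ)) = (q : ℝ) * t i := by
    intro i
    rw [hDφ]
    simp only [ContinuousLinearMap.comp_apply]
    have hΔap : Δ (Pi.single i (1 : ℝ)) = fun _ => Pi.single i (1 : ℝ) := rfl
    have hΔa : Δ a = fun _ => a := rfl
    rw [hΔap, ContinuousMultilinearMap.linearDeriv_apply]
    have hterm : ∀ k : Fin q,
        Bc (Function.update (fun _ => a) k (Pi.single i (1 : ℝ))) = t i := by
      intro k
      rw [hBc, equidegBc_apply]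
      have : (fun j => equidegL D (Function.update (fun _ => a) k (Pi.single i (1 : ℝ)) j))
          = Function.update (fun _ : Fin q => L a) k (D i) := by
        funext j
        rw [← hLsingle i, ← hL]
        exact Function.apply_update (fun _ x => L x) (fun _ => a) k (Pi.single i 1) j
      rw [this, ht]
      exact equideg_sym_update B hBsymm (L a) (D i) k z
    calc (∑ k : Fin q, Bc (Function.update (fun _ => a) k (Pi.single i (1 : ℝ))))
        = ∑ _k : Fin q, t i := Finset.sum_congr rfl fun k _ => hterm k
      _ = (q : ℝ) * t i := by rw [Finset.sum_const, Finset.card_univ, Fintype.card_fin,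
        nsmul_eq_mul]
  have hkey : ∀ i, Λ * (a i)⁻¹ + Λ₀ * ((q : ℝ) * t i) = 0 := by
    intro i
    have := congrArg (fun T : (Fin r → ℝ) →L[ℝ] ℝ => T (Pi.single i (1 : ℝ))) hΛeq
    simp only [ContinuousLinearMap.add_apply, ContinuousLinearMap.smul_apply,
      ContinuousLinearMap.zero_apply, smul_eq_mul] at this
    rw [hDg_single i, hDφ_single i] at this
    exact this
  have hqR : (q : ℝ) ≠ 0 := Nat.cast_ne_zero.2 hq.ne'
  have hΛ₀ : Λ₀ ≠ 0 := by
    intro h0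
    have hk := hkey i₀
    rw [h0, zero_mul, add_zero] at hk
    have : Λ = 0 := by
      have := mul_eq_zero.1 hk
      rcases this with h | h
      · exact h
      · exact absurd h (inv_ne_zero (hapos i₀).ne')
    apply hΛne
    rw [this, h0]
    rfl
  set κ := -Λ / (Λ₀ * q) with hκdef
  have hκ : ∀ i, a i * t i = κ := by
    intro i
    have hk := hkey i
    have hai := (hapos i).ne'
    rw [hκdef, eq_div_iff (mul_ne_zero hΛ₀ hqR)]
    have h2 : (Λ * (a i)⁻¹) * a i + (Λ₀ * ((q : ℝ) * t i)) * a i = 0 := by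
      rw [← add_mul, hk, zero_mul]
    rw [mul_assoc, inv_mul_cancel₀ hai, mul_one] at h2
    nlinarith [h2]
  -- summing up
  have hDa : (fun _ : Fin q => (∑ j, a j • D j)) = (fun _ : Fin q => L a) := rfl
  have hupdl : ∀ i, B (Function.update (fun _ : Fin q => L a) z (a i • D i)) = κ := by
    intro i
    rw [MultilinearMap.map_update_smul, smul_eq_mul]
    exact hκ i
  have hsumκ : B (fun _ : Fin q => L a) = r * κ := by
    have h1 : (fun _ : Fin q => L a)
        = Function.update (fun _ : Fin q => L a) z (L a) := by
      rw [Function.update_eq_self]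
    rw [h1]
    have h2 : L a = ∑ i, a i • D i := rfl
    rw [h2, MultilinearMap.map_update_sum]
    calc (∑ i, B (Function.update (fun _ : Fin q => L a) z (a i • D i)))
        = ∑ _i : Fin r, κ := Finset.sum_congr rfl fun i _ => hupdl i
      _ = r * κ := by rw [Finset.sum_const, Finset.card_univ, Fintype.card_fin, nsmul_eq_mul]
  refine ⟨a, hapos, fun i => ?_⟩
  rw [show (fun _ : Fin q => ∑ j, a j • D j) = (fun _ : Fin q => L a) from rfl, hsumκ, hupdl i]
  field_simp
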